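/- (Combined pessimism) If both |R̂(s,a) − R(s,a)| ≤ u_R(s,a) for all (s,a) and ‖T(·|s,a) − T̂(·|s,a)‖₁ · R_max ≤ u_T(s,a) for all (s,a), then for every policy π, E_{τ ∼ d^π_{T̂}}[ R̂(τ) − u_T(τ) − u_R(τ) ] ≤ V^π_{T,R}. -/

import Mathlib

open Finset

variable {S A : Type*}

/-- Probability of a length-`H` trajectory (sequence of state-action pairs) under
policy `π`, transition kernel `T`, starting from initial state `s₀`. -/
noncomputable def trajProb [Fintype S] [Fintype A] [DecidableEq S]
    (H : ℕ) (hH : 0 < H) (s₀ : S) (T : S → A → S → ℝ) (π : S → A → ℝ)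
    (τ : Fin H → S × A) : ℝ :=
  (if (τ ⟨0, hH⟩).1 = s₀ then (1 : ℝ) else 0) *
    (∏ j, π (τ j).1 (τ j).2) *
    ∏ j : Fin (H - 1),
      T (τ (j.castLE (Nat.sub_le H 1))).1 (τ (j.castLE (Nat.sub_le H 1))).2
        (τ ⟨j.val + 1, by have := j.isLt; omega⟩).1

/-- Trajectory return: sum of per-step rewards. -/
def trajReward (H : ℕ) (R : S → A → ℝ) (τ : Fin H → S × A) : ℝ :=
  ∑ j, R (τ j).1 (τ j).2

/-- L1 (total-variation style) distance between two kernels at `(s, a)`. -/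
def tvDist [Fintype S] (T T' : S → A → S → ℝ) (s : S) (a : A) : ℝ :=
  ∑ s', |T s a s' - T' s a s'|

/-- Expected return of policy `π` under kernel `T` and reward `R`. -/
noncomputable def value [Fintype S] [Fintype A] [DecidableEq S] [DecidableEq A]
    (H : ℕ) (hH : 0 < H) (s₀ : S) (T : S → A → S → ℝ) (π : S → A → ℝ)
    (R : S → A → ℝ) : ℝ :=
  ∑ τ : Fin H → S × A, trajProb H hH s₀ T π τ * trajReward H R τ

lemma trajProb_one [Fintype S] [Fintype A] [DecidableEq S]
    (s₀ : S) (T : S → A → S → ℝ) (π : S → A → ℝ) (τ : Fin 1 → S × A) :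
    trajProb 1 one_pos s₀ T π τ =
      (if (τ 0).1 = s₀ then (1 : ℝ) else 0) * π (τ 0).1 (τ 0).2 := by
  simp [trajProb]

lemma trajProb_cons [Fintype S] [Fintype A] [DecidableEq S]
    (m : ℕ) (s₀ : S) (T : S → A → S → ℝ) (π : S → A → ℝ)
    (x : S × A) (σ : Fin (m+1) → S × A) :
    trajProb (m+1+1) (Nat.succ_pos _) s₀ T π (Fin.cons x σ) =
      (if x.1 = s₀ then (1 : ℝ) else 0) * π x.1 x.2 *
        ∑ s', T x.1 x.2 s' * trajProb (m+1) (Nat.succ_pos m) s' T π σ := by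
  set τ : Fin (m+1+1) → S × A := Fin.cons x σ with hτ
  simp only [trajProb]
  have hprod : (∏ j : Fin (m+1+1-1),
      T (τ (j.castLE (Nat.sub_le (m+1+1) 1))).1
        (τ (j.castLE (Nat.sub_le (m+1+1) 1))).2
        (τ ⟨j.val+1, by have := j.isLt; omega⟩).1)
    = ∏ j : Fin (m+1),
      T (τ (j.castLE (by omega : m+1 ≤ m+1+1))).1 (τ (j.castLE (by omega : m+1 ≤ m+1+1))).2
        (τ ⟨j.val+1, by omega⟩).1 := rfl
  rw [hprod]
  have hprod2 : (∏ j : Fin (m+1-1),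
      T (σ (j.castLE (Nat.sub_le (m+1) 1))).1 (σ (j.castLE (Nat.sub_le (m+1) 1))).2
        (σ ⟨j.val+1, by have := j.isLt; omega⟩).1)
    = ∏ j : Fin m,
      T (σ (j.castLE (by omega : m ≤ m+1))).1 (σ (j.castLE (by omega : m ≤ m+1))).2
        (σ ⟨j.val+1, by omega⟩).1 := rfl
  rw [hprod2]
  rw [Fin.prod_univ_succ (fun j : Fin (m+1) =>
        T (τ (j.castLE (by omega : m+1 ≤ m+1+1))).1 (τ (j.castLE (by omega : m+1 ≤ m+1+1))).2
          (τ ⟨j.val+1, by omega⟩).1),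
      Fin.prod_univ_succ (fun j : Fin (m+1+1) => π (τ j).1 (τ j).2)]
  simp only [hτ, Fin.cons_zero, Fin.cons_succ, Fin.mk_zero, mul_ite, ite_mul, mul_zero,
    zero_mul, mul_one, one_mul, Finset.sum_ite_eq, Finset.mem_univ, if_true]
  have e1 : (@Fin.cons (m+1) (fun _ => S × A) x σ (Fin.castLE (by omega : m+1 ≤ m+1+1) (0 : Fin (m+1)))) = x := rfl
  have e2 : (@Fin.cons (m+1) (fun _ => S × A) x σ (⟨(0 : Fin (m+1)).val+1, by omega⟩ : Fin (m+1+1))) = σ 0 := rfl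
  have e3 : ∀ j : Fin m, (@Fin.cons (m+1) (fun _ => S × A) x σ (Fin.castLE (by omega : m+1 ≤ m+1+1) j.succ))
      = σ (Fin.castLE (by omega : m ≤ m+1) j) := fun j => rfl
  have e4 : ∀ j : Fin m, (@Fin.cons (m+1) (fun _ => S × A) x σ (⟨j.succ.val+1, by omega⟩ : Fin (m+1+1)))
      = σ ⟨j.val+1, by omega⟩ := fun j => rfl
  simp only [e1, e2, e3, e4]
  split
  · show _ = π x.1 x.2 * ∑ s', T x.1 x.2 s' * (((if (σ 0).1 = s' then (1:ℝ) else 0) * ∏ k, π (σ k).1 (σ k).2) * ∏ j : Fin m, T (σ (Fin.castLE (by omega) j)).1 (σ (Fin.castLE (by omega) j)).2 (σ ⟨j.val + 1, by omega⟩).1)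
    simp only [mul_ite, ite_mul, mul_one, one_mul, mul_zero, zero_mul, Finset.sum_ite_eq, Finset.mem_univ, if_true]
    ring
  · ring

noncomputable def vval [Fintype S] [Fintype A] (T : S → A → S → ℝ) (π : S → A → ℝ)
    (g : S → A → ℝ) : ℕ → S → ℝ
  | 0, _ => 0
  | (h+1), s => ∑ a, π s a * (g s a + ∑ s', T s a s' * vval T π g h s')

lemma bridge [Fintype S] [Fintype A] [DecidableEq S]
    (T : S → A → S → ℝ) (π : S → A → ℝ) (g : S → A → ℝ)
    (hT : ∀ s a, ∑ s', T s a s' = 1) (hπ : ∀ s, ∑ a, π s a = 1) :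
    ∀ (n : ℕ) (c : ℝ) (s₀ : S),
      ∑ τ : Fin (n+1) → S × A,
        trajProb (n+1) (Nat.succ_pos n) s₀ T π τ * (c + ∑ j, g (τ j).1 (τ j).2)
      = c + vval T π g (n+1) s₀ := by
  intro n
  induction n with
  | zero =>
    intro c s₀
    rw [← Equiv.sum_comp (Equiv.funUnique (Fin 1) (S × A)).symm]
    have h01 : trajProb (0+1) (Nat.succ_pos 0) s₀ T π = trajProb 1 one_pos s₀ T π := rfl
    simp only [Equiv.funUnique_symm_apply, uniqueElim_const, h01, trajProb_one]
    rw [Fintype.sum_prod_type, Finset.sum_comm]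
    simp only [ite_mul, zero_mul, one_mul, Finset.sum_ite_eq', Finset.mem_univ, if_true]
    have hv : vval T π g (0+1) s₀ = ∑ a, π s₀ a * g s₀ a := by
      simp [vval]
    rw [hv]
    have : ∀ a : A, π s₀ a * (c + ∑ _x : Fin (0+1), g s₀ a) = π s₀ a * c + π s₀ a * g s₀ a := by
      intro a
      simp [Fin.sum_univ_one]
      ring
    show ∑ a, ∑ x_1 : S, (if x_1 = s₀ then (1:ℝ) else 0) * π x_1 a * (c + ∑ _x : Fin (0+1), g x_1 a) = c + ∑ a, π s₀ a * g s₀ a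
    simp only [ite_mul, zero_mul, one_mul, Finset.sum_ite_eq', Finset.mem_univ, if_true]
    rw [Finset.sum_congr rfl (fun a _ => this a), Finset.sum_add_distrib, ← Finset.sum_mul,
      hπ, one_mul]
  | succ m ih =>
    intro c s₀
    rw [← Equiv.sum_comp (Fin.consEquiv (fun _ : Fin (m+1+1) => S × A))]
    rw [Fintype.sum_prod_type]
    have step1 : ∀ (x : S × A) (y : Fin (m+1) → S × A),
        trajProb (m+1+1) (Nat.succ_pos (m+1)) s₀ T π (Fin.cons x y) *
          (c + ∑ j : Fin (m+1+1), g (@Fin.cons (m+1) (fun _ => S × A) x y j).1 (@Fin.cons (m+1) (fun _ => S × A) x y j).2)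
        = ∑ s', (if x.1 = s₀ then (1:ℝ) else 0) * π x.1 x.2 *
            (T x.1 x.2 s' * (trajProb (m+1) (Nat.succ_pos m) s' T π y *
              ((c + g x.1 x.2) + ∑ j : Fin (m+1), g (y j).1 (y j).2))) := by
      intro x y
      rw [trajProb_cons, Fin.sum_univ_succ]
      simp only [Fin.cons_zero, Fin.cons_succ]
      rw [Finset.mul_sum, Finset.sum_mul]
      exact Finset.sum_congr rfl (fun s' _ => by ring)
    have step2 : ∀ x : S × A,
        (∑ y : Fin (m+1) → S × A,
          trajProb (m+1+1) (Nat.succ_pos (m+1)) s₀ T π (Fin.cons x y) *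
            (c + ∑ j : Fin (m+1+1), g (@Fin.cons (m+1) (fun _ => S × A) x y j).1 (@Fin.cons (m+1) (fun _ => S × A) x y j).2))
        = ∑ s', (if x.1 = s₀ then (1:ℝ) else 0) * π x.1 x.2 *
            (T x.1 x.2 s' * ((c + g x.1 x.2) + vval T π g (m+1) s')) := by
      intro x
      rw [Finset.sum_congr rfl (fun y _ => step1 x y), Finset.sum_comm]
      refine Finset.sum_congr rfl (fun s' _ => ?_)
      rw [← Finset.mul_sum, ← Finset.mul_sum, ← ih (c + g x.1 x.2) s']
    have hc : ∀ (x : S × A) (y : Fin (m+1) → S × A),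
        ((Fin.consEquiv fun _ : Fin (m+1+1) => S × A) (x, y)) = Fin.cons x y := fun x y => rfl
    simp only [Fin.consEquiv_apply, hc]
    rw [Finset.sum_congr rfl (fun x _ => step2 x), Fintype.sum_prod_type]
    simp only [ite_mul, zero_mul, one_mul, Finset.sum_ite_irrel, Finset.sum_const_zero,
      Finset.sum_ite_eq', Finset.mem_univ, if_true]
    have hv : vval T π g (m+1+1) s₀
        = ∑ a, π s₀ a * (g s₀ a + ∑ s', T s₀ a s' * vval T π g (m+1) s') := by
      simp [vval]
    rw [hv]
    have key : ∀ a : A, (∑ s', π s₀ a * (T s₀ a s' * ((c + g s₀ a) + vval T π g (m+1) s')))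
        = π s₀ a * c + π s₀ a * (g s₀ a + ∑ s', T s₀ a s' * vval T π g (m+1) s') := by
      intro a
      have expand : ∀ s' : S, π s₀ a * (T s₀ a s' * ((c + g s₀ a) + vval T π g (m+1) s'))
          = T s₀ a s' * (π s₀ a * (c + g s₀ a)) + π s₀ a * (T s₀ a s' * vval T π g (m+1) s') := by
        intro s'; ring
      rw [Finset.sum_congr rfl (fun s' _ => expand s'), Finset.sum_add_distrib,
        ← Finset.sum_mul, hT, one_mul, ← Finset.mul_sum]
      ring
    rw [Finset.sum_congr rfl (fun a _ => key a), Finset.sum_add_distrib, ← Finset.sum_mul,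
      hπ, one_mul]

lemma vval_zero_fn [Fintype S] [Fintype A] (T : S → A → S → ℝ) (π : S → A → ℝ) :
    ∀ (n : ℕ) (s : S), vval T π (fun _ _ => (0:ℝ)) n s = 0 := by
  intro n
  induction n with
  | zero => intro s; simp [vval]
  | succ m ih => intro s; simp [vval, ih]

lemma traj_mass [Fintype S] [Fintype A] [DecidableEq S]
    (T : S → A → S → ℝ) (π : S → A → ℝ)
    (hT : ∀ s a, ∑ s', T s a s' = 1) (hπ : ∀ s, ∑ a, π s a = 1)
    (n : ℕ) (s₀ : S) :
    ∑ τ : Fin (n+1) → S × A, trajProb (n+1) (Nat.succ_pos n) s₀ T π τ = 1 := by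
  have := bridge T π (fun _ _ => (0:ℝ)) hT hπ n 1 s₀
  simpa [vval_zero_fn] using this

lemma trajProb_nonneg [Fintype S] [Fintype A] [DecidableEq S]
    (H : ℕ) (hH : 0 < H) (s₀ : S) (T : S → A → S → ℝ) (π : S → A → ℝ)
    (hT : ∀ s a s', 0 ≤ T s a s') (hπ : ∀ s a, 0 ≤ π s a) (τ : Fin H → S × A) :
    0 ≤ trajProb H hH s₀ T π τ := by
  unfold trajProb
  refine mul_nonneg (mul_nonneg ?_ ?_) ?_
  · split <;> norm_num
  · exact Finset.prod_nonneg fun j _ => hπ _ _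
  · exact Finset.prod_nonneg fun j _ => hT _ _ _

lemma vval_nonneg [Fintype S] [Fintype A] (T : S → A → S → ℝ) (π : S → A → ℝ)
    (g : S → A → ℝ) (hT : ∀ s a s', 0 ≤ T s a s') (hπ : ∀ s a, 0 ≤ π s a)
    (hg : ∀ s a, 0 ≤ g s a) :
    ∀ (n : ℕ) (s : S), 0 ≤ vval T π g n s := by
  intro n
  induction n with
  | zero => intro s; simp [vval]
  | succ m ih =>
    intro s
    apply Finset.sum_nonneg
    intro a _
    exact mul_nonneg (hπ _ _) (add_nonneg (hg _ _)
      (Finset.sum_nonneg fun s' _ => mul_nonneg (hT _ _ _) (ih s')))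

lemma vval_mono [Fintype S] [Fintype A] (T : S → A → S → ℝ) (π : S → A → ℝ)
    (g : S → A → ℝ) (hT : ∀ s a s', 0 ≤ T s a s') (hπ : ∀ s a, 0 ≤ π s a)
    (hg : ∀ s a, 0 ≤ g s a) :
    ∀ (n : ℕ) (s : S), vval T π g n s ≤ vval T π g (n+1) s := by
  intro n
  induction n with
  | zero =>
    intro s
    simp only [vval]
    exact Finset.sum_nonneg fun a _ => mul_nonneg (hπ _ _) (add_nonneg (hg _ _)
      (Finset.sum_nonneg fun s' _ => mul_nonneg (hT _ _ _) (le_refl _)))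
  | succ m ih =>
    intro s
    show (∑ a, π s a * (g s a + ∑ s', T s a s' * vval T π g m s'))
      ≤ ∑ a, π s a * (g s a + ∑ s', T s a s' * vval T π g (m+1) s')
    refine Finset.sum_le_sum fun a _ => ?_
    refine mul_le_mul_of_nonneg_left (add_le_add (le_refl _) ?_) (hπ _ _)
    exact Finset.sum_le_sum fun s' _ => mul_le_mul_of_nonneg_left (ih s') (hT _ _ _)

lemma vval_mono_le [Fintype S] [Fintype A] (T : S → A → S → ℝ) (π : S → A → ℝ)
    (g : S → A → ℝ) (hT : ∀ s a s', 0 ≤ T s a s') (hπ : ∀ s a, 0 ≤ π s a)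
    (hg : ∀ s a, 0 ≤ g s a) {n m : ℕ} (h : n ≤ m) (s : S) :
    vval T π g n s ≤ vval T π g m s := by
  induction m with
  | zero => simp_all
  | succ k ih =>
    rcases Nat.lt_or_ge n (k+1) with h' | h'
    · exact le_trans (ih (by omega)) (vval_mono T π g hT hπ hg k s)
    · have : n = k + 1 := by omega
      subst this; rfl

lemma key_compare [Fintype S] [Fintype A] (T That : S → A → S → ℝ) (π : S → A → ℝ)
    (R uT : S → A → ℝ) (Rmax : ℝ)
    (hT : ∀ s a, (∀ s', 0 ≤ T s a s') ∧ ∑ s', T s a s' = 1)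
    (hThat : ∀ s a, (∀ s', 0 ≤ That s a s') ∧ ∑ s', That s a s' = 1)
    (hπ : ∀ s, (∀ a, 0 ≤ π s a) ∧ ∑ a, π s a = 1)
    (hTerr : ∀ s a, tvDist T That s a * Rmax ≤ uT s a)
    (hlb : ∀ n s, 0 ≤ vval T π R n s) (N : ℕ)
    (hub : ∀ n, n ≤ N → ∀ s, vval T π R n s ≤ Rmax) :
    ∀ (n : ℕ), n ≤ N → ∀ (s : S),
      vval That π (fun s a => R s a - uT s a) n s ≤ vval T π R n s := by
  intro n
  induction n with
  | zero => intro _ s; simp [vval]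
  | succ m ih =>
    intro hmN s
    have ih := ih (by omega)
    have hub := hub m (by omega)
    show (∑ a, π s a * ((R s a - uT s a) +
        ∑ s', That s a s' * vval That π (fun s a => R s a - uT s a) m s'))
      ≤ ∑ a, π s a * (R s a + ∑ s', T s a s' * vval T π R m s')
    refine Finset.sum_le_sum fun a _ => ?_
    refine mul_le_mul_of_nonneg_left ?_ ((hπ s).1 a)
    have h1 : (∑ s', That s a s' * vval That π (fun s a => R s a - uT s a) m s')
        ≤ ∑ s', That s a s' * vval T π R m s' :=
      Finset.sum_le_sum fun s' _ => mul_le_mul_of_nonneg_left (ih s') ((hThat s a).1 s')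
    have h2 : (∑ s', That s a s' * vval T π R m s')
        ≤ (∑ s', T s a s' * vval T π R m s') + tvDist T That s a * Rmax := by
      have : ∀ s' : S, That s a s' * vval T π R m s'
          ≤ T s a s' * vval T π R m s' + |T s a s' - That s a s'| * Rmax := by
        intro s'
        have hd : (That s a s' - T s a s') * vval T π R m s'
            ≤ |T s a s' - That s a s'| * Rmax := by
          calc (That s a s' - T s a s') * vval T π R m s'
              ≤ |That s a s' - T s a s'| * vval T π R m s' :=
                mul_le_mul_of_nonneg_right (le_abs_self _) (hlb m s')
            _ ≤ |That s a s' - T s a s'| * Rmax :=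
                mul_le_mul_of_nonneg_left (hub s') (abs_nonneg _)
            _ = |T s a s' - That s a s'| * Rmax := by rw [abs_sub_comm]
        nlinarith [hd]
      calc (∑ s', That s a s' * vval T π R m s')
          ≤ ∑ s', (T s a s' * vval T π R m s' + |T s a s' - That s a s'| * Rmax) :=
            Finset.sum_le_sum fun s' _ => this s'
        _ = (∑ s', T s a s' * vval T π R m s') + tvDist T That s a * Rmax := by
            rw [Finset.sum_add_distrib, ← Finset.sum_mul]; rfl
    have h3 := hTerr s a
    linarith

/-- Combined pessimism: uncertainty-penalized value in the learned model
lower-bounds the true value. -/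
theorem combined_pessimism_lower_bound [Fintype S] [Fintype A] [DecidableEq S]
    [DecidableEq A]
    (H : ℕ) (hH : 0 < H) (s₀ : S) (T That : S → A → S → ℝ) (π : S → A → ℝ)
    (R Rhat : S → A → ℝ) (uT uR : S → A → ℝ) (Rmax : ℝ) (hRmax : 0 ≤ Rmax)
    (hT : ∀ s a, (∀ s', 0 ≤ T s a s') ∧ ∑ s', T s a s' = 1)
    (hThat : ∀ s a, (∀ s', 0 ≤ That s a s') ∧ ∑ s', That s a s' = 1)
    (hπ : ∀ s, (∀ a, 0 ≤ π s a) ∧ ∑ a, π s a = 1)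
    (huT : ∀ s a, 0 ≤ uT s a) (huR : ∀ s a, 0 ≤ uR s a)
    (hRnonneg : ∀ s a, 0 ≤ R s a)
    (hRbound : ∀ τ : Fin H → S × A, trajReward H R τ ∈ Set.Icc 0 Rmax)
    (hRerr : ∀ s a, |Rhat s a - R s a| ≤ uR s a)
    (hTerr : ∀ s a, tvDist T That s a * Rmax ≤ uT s a) :
    (∑ τ : Fin H → S × A, trajProb H hH s₀ That π τ *
        (trajReward H Rhat τ - (∑ j, uT (τ j).1 (τ j).2) -
          ∑ j, uR (τ j).1 (τ j).2)) ≤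
      value H hH s₀ T π R := by
  obtain ⟨n, rfl⟩ : ∃ n, H = n + 1 := ⟨H - 1, by omega⟩
  have hT1 : ∀ s a, ∑ s', T s a s' = 1 := fun s a => (hT s a).2
  have hThat1 : ∀ s a, ∑ s', That s a s' = 1 := fun s a => (hThat s a).2
  have hπ1 : ∀ s, ∑ a, π s a = 1 := fun s => (hπ s).2
  -- upper bound on vval T π R
  have hub : ∀ (h : ℕ), h ≤ n+1 → ∀ (s : S), vval T π R h s ≤ Rmax := by
    have hH' : ∀ s : S, vval T π R (n+1) s ≤ Rmax := by
      intro s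
      have hb := bridge T π R hT1 hπ1 n 0 s
      simp only [zero_add] at hb
      rw [← hb]
      calc (∑ τ : Fin (n+1) → S × A,
            trajProb (n+1) (Nat.succ_pos n) s T π τ * ∑ j, R (τ j).1 (τ j).2)
          ≤ ∑ τ : Fin (n+1) → S × A, trajProb (n+1) (Nat.succ_pos n) s T π τ * Rmax := by
            refine Finset.sum_le_sum fun τ _ => ?_
            exact mul_le_mul_of_nonneg_left (hRbound τ).2
              (trajProb_nonneg _ _ _ _ _ (fun s a s' => (hT s a).1 s') (fun s a => (hπ s).1 a) τ)
        _ = Rmax := by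
            rw [← Finset.sum_mul, traj_mass T π hT1 hπ1 n s, one_mul]
    intro h hh s
    exact le_trans (vval_mono_le T π R (fun s a s' => (hT s a).1 s') (fun s a => (hπ s).1 a)
      hRnonneg hh s) (hH' s)
  have hlb := vval_nonneg T π R (fun s a s' => (hT s a).1 s') (fun s a => (hπ s).1 a) hRnonneg
  have hkey := key_compare T That π R uT Rmax hT hThat hπ hTerr hlb (n+1) hub (n+1) le_rfl s₀
  have hbridge1 := bridge That π (fun s a => R s a - uT s a) hThat1 hπ1 n 0 s₀
  have hbridge2 := bridge T π R hT1 hπ1 n 0 s₀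
  simp only [zero_add] at hbridge1 hbridge2
  have hpt : ∀ τ : Fin (n+1) → S × A,
      trajReward (n+1) Rhat τ - (∑ j, uT (τ j).1 (τ j).2) - (∑ j, uR (τ j).1 (τ j).2)
        ≤ ∑ j, (R (τ j).1 (τ j).2 - uT (τ j).1 (τ j).2) := by
    intro τ
    have h1 : trajReward (n+1) Rhat τ
        ≤ (∑ j, R (τ j).1 (τ j).2) + ∑ j, uR (τ j).1 (τ j).2 := by
      rw [← Finset.sum_add_distrib]
      refine Finset.sum_le_sum fun j _ => ?_
      have h := hRerr (τ j).1 (τ j).2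
      have h' := le_trans (le_abs_self _) h
      linarith
    have h2 : (∑ j, (R (τ j).1 (τ j).2 - uT (τ j).1 (τ j).2))
        = (∑ j, R (τ j).1 (τ j).2) - ∑ j, uT (τ j).1 (τ j).2 := Finset.sum_sub_distrib _ _
    linarith
  calc (∑ τ : Fin (n+1) → S × A, trajProb (n+1) hH s₀ That π τ *
        (trajReward (n+1) Rhat τ - (∑ j, uT (τ j).1 (τ j).2) - ∑ j, uR (τ j).1 (τ j).2))
      ≤ ∑ τ : Fin (n+1) → S × A, trajProb (n+1) hH s₀ That π τ *
          (∑ j, (R (τ j).1 (τ j).2 - uT (τ j).1 (τ j).2)) := by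
        refine Finset.sum_le_sum fun τ _ => ?_
        exact mul_le_mul_of_nonneg_left (hpt τ)
          (trajProb_nonneg _ _ _ _ _ (fun s a s' => (hThat s a).1 s') (fun s a => (hπ s).1 a) τ)
    _ = vval That π (fun s a => R s a - uT s a) (n+1) s₀ := hbridge1
    _ ≤ vval T π R (n+1) s₀ := hkey
    _ = value (n+1) hH s₀ T π R := by
        rw [← hbridge2]; rfl
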